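/- Let d ≥ 1, b > 1 real, w a permutation of {1,…,d}, and T ⊆ {1,…,d} with s = #T. Define ρ⃗_w ∈ ℝ^d by (ρ⃗_w)_i = (b−1)·∑_{n=1}^{∞} (d+1−i−wⁿ(i))/bⁿ and f_T(y) = (y₁+⋯+y_s) − b·∑_{t∈T} y_{d+1−t} − s(d−s) + b·(∑_{t∈T} t − s(s+1)/2). Then f_T(ρ⃗_w)/(b−1) = ∑_{n=0}^{∞} b^{−n} · ( ∑_{t∈T} w^{n+1}(d+1−t) − ∑_{i=1}^{s} wⁿ(i) ). -/

import Mathlib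

open Finset

lemma summable_aux (b : ℝ) (hb : 1 < b) (c : ℕ → ℝ) (C : ℝ)
    (h : ∀ n, |c n| ≤ C) : Summable (fun n => c n / b ^ n) := by
  have hb0 : (0:ℝ) < b := lt_trans one_pos hb
  have h1 : (1/b) < 1 := by rw [div_lt_one hb0]; exact hb
  have h0 : (0:ℝ) ≤ 1/b := by positivity
  have hg : Summable (fun n : ℕ => C * (1/b)^n) :=
    (summable_geometric_of_lt_one h0 h1).mul_left C
  apply Summable.of_abs
  apply hg.of_nonneg_of_le (fun n => abs_nonneg _)
  intro n
  have hbn : (0:ℝ) < b ^ n := by positivity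
  rw [abs_div, abs_pow, abs_of_pos hb0]
  have : C * (1/b)^n = C / b^n := by
    rw [div_pow, one_pow, mul_one_div]
  rw [this, div_le_div_iff_of_pos_right hbn]
  exact h n

lemma summable_aux' (b : ℝ) (hb : 1 < b) (c : ℕ → ℝ) (C : ℝ)
    (h : ∀ n, |c n| ≤ C) : Summable (fun n => c n / b ^ (n+1)) := by
  have hb0 : (0:ℝ) < b := lt_trans one_pos hb
  have := summable_aux b hb (fun n => c n / b) C (fun n => by
    rw [abs_div, abs_of_pos hb0]
    exact le_trans (div_le_self (abs_nonneg _) hb.le) (h n))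
  apply this.congr
  intro n
  rw [pow_succ]; ring

lemma gauss_real (s : ℕ) : ∑ i ∈ Finset.Icc 1 s, (i:ℝ) = s * (s+1) / 2 := by
  induction s with
  | zero => simp
  | succ s ih =>
    rw [Finset.sum_Icc_succ_top (by omega)]
    push_cast
    rw [ih]; ring

/-- The affine functional `f_T(y) = (y₁+⋯+y_s) − b·∑_{t∈T} y_{d+1−t} − s(d−s)
+ b·(∑_{t∈T} t − s(s+1)/2)`, where `s = #T`. -/
noncomputable def fT (d : ℕ) (b : ℝ) (T : Finset ℕ) (y : ℕ → ℝ) : ℝ :=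
  (∑ i ∈ Finset.Icc 1 T.card, y i) - b * ∑ t ∈ T, y (d + 1 - t)
    - T.card * ((d : ℝ) - T.card)
    + b * ((∑ t ∈ T, (t : ℝ)) - T.card * (T.card + 1) / 2)

/-- The identity `f_T(ρ⃗_w)/(b−1) = ∑_{n=0}^∞ b^{−n}·(∑_{t∈T} w^{n+1}(d+1−t)
− ∑_{i=1}^s wⁿ(i))`, where `(ρ⃗_w)_i = (b−1)·∑_{n≥1}(d+1−i−wⁿ(i))/bⁿ`. -/
theorem fT_rho_w_eq (d : ℕ) (hd : 1 ≤ d) (b : ℝ) (hb : 1 < b)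
    (w : ℕ → ℕ) (hw : Set.BijOn w (Set.Icc 1 d) (Set.Icc 1 d))
    (T : Finset ℕ) (hT : T ⊆ Finset.Icc 1 d)
    (ρ : ℕ → ℝ)
    (hρ : ∀ i, ρ i = (b - 1) *
      ∑' n : ℕ, (((d : ℝ) + 1 - (i : ℝ)) - (w^[n + 1] i : ℝ)) / b ^ (n + 1)) :
    fT d b T ρ / (b - 1) =
      ∑' n : ℕ, ((∑ t ∈ T, (w^[n + 1] (d + 1 - t) : ℝ)) -
        ∑ i ∈ Finset.Icc 1 T.card, (w^[n] i : ℝ)) / b ^ n := by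
  have hb0 : (0:ℝ) < b := lt_trans one_pos hb
  have hbne : b ≠ 0 := ne_of_gt hb0
  have hb1 : (0:ℝ) < b - 1 := by linarith
  have hb1ne : b - 1 ≠ 0 := ne_of_gt hb1
  set s := T.card with hs
  have hsd : s ≤ d := by
    have := Finset.card_le_card hT
    simpa using this
  -- iterates stay in [1, d]
  have hmem : ∀ n i, 1 ≤ i → i ≤ d → 1 ≤ w^[n] i ∧ w^[n] i ≤ d := by
    intro n
    induction n with
    | zero => intro i h1 h2; simpa using ⟨h1, h2⟩
    | succ n ih =>
      intro i h1 h2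
      rw [Function.iterate_succ_apply']
      have h3 := ih i h1 h2
      have h4 := hw.mapsTo (Set.mem_Icc.mpr h3)
      exact Set.mem_Icc.mp h4
  have hbd : ∀ n i, 1 ≤ i → i ≤ d → |(w^[n] i : ℝ)| ≤ (d:ℝ) := by
    intro n i h1 h2
    have := (hmem n i h1 h2).2
    rw [abs_of_nonneg (by positivity)]
    exact_mod_cast this
  -- geometric sum
  have h1b : (1/b) < 1 := by rw [div_lt_one hb0]; exact hb
  have h0b : (0:ℝ) ≤ 1/b := by positivity
  have hgeo : ∑' n : ℕ, (1/b) ^ (n+1) = 1 / (b-1) := by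
    have : ∀ n : ℕ, (1/b)^(n+1) = (1/b)^n * (1/b) := fun n => pow_succ _ _
    rw [tsum_congr this, tsum_mul_right, tsum_geometric_of_lt_one h0b h1b]
    rw [inv_eq_one_div]
    field_simp
  -- the tail sums
  set A : ℕ → ℝ := fun j => ∑' n : ℕ, (w^[n+1] j : ℝ) / b ^ (n+1) with hA
  have hsumA : ∀ j, 1 ≤ j → j ≤ d →
      Summable (fun n : ℕ => (w^[n+1] j : ℝ) / b ^ (n+1)) := by
    intro j h1 h2
    exact summable_aux' b hb _ (d:ℝ) (fun n => hbd (n+1) j h1 h2)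
  -- ρ in closed form
  have hρ' : ∀ j, 1 ≤ j → j ≤ d → ρ j = ((d:ℝ) + 1 - j) - (b-1) * A j := by
    intro j h1 h2
    rw [hρ j]
    have hterm : ∀ n : ℕ, (((d : ℝ) + 1 - (j : ℝ)) - (w^[n + 1] j : ℝ)) / b ^ (n + 1)
        = ((d:ℝ) + 1 - j) * (1/b)^(n+1) - (w^[n+1] j : ℝ) / b ^ (n+1) := by
      intro n
      rw [sub_div, div_pow, one_pow, mul_one_div]
    have hg1 : Summable (fun n : ℕ => ((d:ℝ)+1-j) * (1/b)^(n+1)) := by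
      have h := ((summable_geometric_of_lt_one h0b h1b).mul_left ((d:ℝ)+1-(j:ℝ))).comp_injective (add_left_injective 1)
      exact h
    rw [tsum_congr hterm, Summable.tsum_sub hg1 (hsumA j h1 h2), tsum_mul_left, hgeo, mul_sub]
    have hc : (b-1) * (((d:ℝ)+1-j) * (1/(b-1))) = (d:ℝ)+1-j := by field_simp
    rw [hc]
  have hsumA' : ∀ j, 1 ≤ j → j ≤ d →
      Summable (fun n : ℕ => (w^[n+1] j : ℝ) / b ^ n) :=
    fun j h1 h2 => summable_aux b hb _ (d:ℝ) (fun n => hbd (n+1) j h1 h2)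
  have ht' : ∀ t ∈ T, 1 ≤ d+1-t ∧ d+1-t ≤ d := by
    intro t ht; have := Finset.mem_Icc.mp (hT ht); omega
  have hi' : ∀ i ∈ Finset.Icc 1 s, 1 ≤ i ∧ i ≤ d := by
    intro i hi; have := Finset.mem_Icc.mp hi; omega
  have hS2 : Summable (fun n : ℕ => (∑ t ∈ T, (w^[n+1] (d+1-t) : ℝ)) / b ^ n) := by
    apply summable_aux b hb _ ((d:ℝ)*(d:ℝ))
    intro n
    calc |∑ t ∈ T, (w^[n+1] (d+1-t) : ℝ)| ≤ ∑ t ∈ T, |(w^[n+1] (d+1-t) : ℝ)| :=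
          Finset.abs_sum_le_sum_abs _ _
    _ ≤ ∑ _t ∈ T, (d:ℝ) := Finset.sum_le_sum (fun t ht => hbd _ _ (ht' t ht).1 (ht' t ht).2)
    _ = (s:ℝ) * d := by rw [Finset.sum_const, nsmul_eq_mul, ← hs]
    _ ≤ (d:ℝ) * d := mul_le_mul_of_nonneg_right (Nat.cast_le.mpr hsd) (Nat.cast_nonneg d)
  have hS1 : Summable (fun n : ℕ => (∑ i ∈ Finset.Icc 1 s, (w^[n] i : ℝ)) / b ^ n) := by
    apply summable_aux b hb _ ((d:ℝ)*(d:ℝ))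
    intro n
    calc |∑ i ∈ Finset.Icc 1 s, (w^[n] i : ℝ)| ≤ ∑ i ∈ Finset.Icc 1 s, |(w^[n] i : ℝ)| :=
          Finset.abs_sum_le_sum_abs _ _
    _ ≤ ∑ _i ∈ Finset.Icc 1 s, (d:ℝ) := Finset.sum_le_sum (fun i hi => hbd _ _ (hi' i hi).1 (hi' i hi).2)
    _ = ((Finset.Icc 1 s).card :ℝ) * d := by rw [Finset.sum_const, nsmul_eq_mul]
    _ ≤ (d:ℝ) * d := by
        apply mul_le_mul_of_nonneg_right _ (Nat.cast_nonneg d)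
        have : (Finset.Icc 1 s).card = s := by rw [Nat.card_Icc]; omega
        rw [this]
        exact_mod_cast hsd
  have e1 : ∑' n : ℕ, (∑ t ∈ T, (w^[n+1] (d+1-t) : ℝ)) / b ^ n = b * ∑ t ∈ T, A (d+1-t) := by
    have h1 : ∀ n : ℕ, (∑ t ∈ T, (w^[n+1] (d+1-t) : ℝ)) / b ^ n
        = ∑ t ∈ T, b * ((w^[n+1] (d+1-t) : ℝ) / b^(n+1)) := by
      intro n
      rw [Finset.sum_div]
      refine Finset.sum_congr rfl (fun t ht => ?_)
      rw [pow_succ]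
      field_simp
    rw [tsum_congr h1,
      Summable.tsum_finsetSum (fun t ht => ((hsumA (d+1-t) (ht' t ht).1 (ht' t ht).2).mul_left b)),
      Finset.mul_sum]
    refine Finset.sum_congr rfl (fun t ht => ?_)
    rw [tsum_mul_left]
  have e2 : ∑' n : ℕ, (∑ i ∈ Finset.Icc 1 s, (w^[n] i : ℝ)) / b ^ n
      = (s:ℝ)*((s:ℝ)+1)/2 + ∑ i ∈ Finset.Icc 1 s, A i := by
    rw [Summable.tsum_eq_zero_add hS1]
    congr 1
    · simp only [Function.iterate_zero, id_eq, pow_zero, div_one]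
      exact gauss_real s
    · have h1 : ∀ n : ℕ, (∑ i ∈ Finset.Icc 1 s, (w^[n+1] i : ℝ)) / b ^ (n+1)
          = ∑ i ∈ Finset.Icc 1 s, (w^[n+1] i : ℝ) / b^(n+1) :=
        fun n => Finset.sum_div _ _ _
      rw [tsum_congr h1, Summable.tsum_finsetSum (fun i hi => hsumA i (hi' i hi).1 (hi' i hi).2)]
  have hRHS : (∑' n : ℕ, ((∑ t ∈ T, (w^[n + 1] (d + 1 - t) : ℝ)) -
        ∑ i ∈ Finset.Icc 1 s, (w^[n] i : ℝ)) / b ^ n)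
      = b * (∑ t ∈ T, A (d+1-t)) - ((s:ℝ)*((s:ℝ)+1)/2 + ∑ i ∈ Finset.Icc 1 s, A i) := by
    have h1 : ∀ n : ℕ, ((∑ t ∈ T, (w^[n + 1] (d + 1 - t) : ℝ)) -
          ∑ i ∈ Finset.Icc 1 s, (w^[n] i : ℝ)) / b ^ n
        = (∑ t ∈ T, (w^[n+1] (d+1-t) : ℝ)) / b ^ n
          - (∑ i ∈ Finset.Icc 1 s, (w^[n] i : ℝ)) / b ^ n :=
      fun n => sub_div _ _ _
    rw [tsum_congr h1, Summable.tsum_sub hS2 hS1, e1, e2]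
  have hρ1 : ∑ i ∈ Finset.Icc 1 s, ρ i
      = ((s:ℝ)*((d:ℝ)+1) - (s:ℝ)*((s:ℝ)+1)/2) - (b-1) * ∑ i ∈ Finset.Icc 1 s, A i := by
    rw [Finset.sum_congr rfl (fun i hi => hρ' i (hi' i hi).1 (hi' i hi).2),
      Finset.sum_sub_distrib, ← Finset.mul_sum]
    congr 1
    rw [Finset.sum_sub_distrib, Finset.sum_const, gauss_real, Nat.card_Icc, nsmul_eq_mul]
    have h6 : s + 1 - 1 = s := by omega
    rw [h6]
  have hρ2 : ∑ t ∈ T, ρ (d+1-t) = (∑ t ∈ T, (t:ℝ)) - (b-1) * ∑ t ∈ T, A (d+1-t) := by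
    have h1 : ∀ t ∈ T, ρ (d+1-t) = (t:ℝ) - (b-1) * A (d+1-t) := by
      intro t ht
      have h2 := ht' t ht
      have h3 := Finset.mem_Icc.mp (hT ht)
      rw [hρ' (d+1-t) h2.1 h2.2]
      congr 1
      have h4 : ((d+1-t : ℕ) : ℝ) = (d:ℝ) + 1 - t := by
        have h5 : t ≤ d + 1 := by omega
        push_cast [h5]
        ring
      rw [h4]; ring
    rw [Finset.sum_congr rfl h1, Finset.sum_sub_distrib, ← Finset.mul_sum]
  rw [hRHS]
  unfold fT
  rw [← hs, hρ1, hρ2]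
  field_simp
  ring
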